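/- Let d > 0 and let x₁, …, x_N ∈ ℝ³ satisfy ‖x_i − x_j‖ ≥ 2d for all i ≠ j. Then for every c = (c₁, …, c_N) ∈ ℝᴺ, Σ_{i ≠ j} c_i c_j/(4π‖x_i − x_j‖) ≥ −(3/(2πd)) Σ_{i=1}^N c_i². -/

import Mathlib

open Real Finset MeasureTheory Set Nat

lemma gram_pow_nonneg {N : ℕ} (b : Fin N → ℝ) (y : Fin N → EuclideanSpace ℝ (Fin 3)) (n : ℕ) :
    0 ≤ ∑ i, ∑ j, b i * b j * (inner ℝ (y i) (y j) : ℝ) ^ n := by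
  have hinner : ∀ i j, (inner ℝ (y i) (y j) : ℝ) = ∑ k, y i k * y j k := by
    intro i j
    simp [PiLp.inner_apply, RCLike.inner_apply, mul_comm]
  set P : Fin N → (Fin n → Fin 3) → ℝ := fun i f => ∏ m, y i (f m) with hP
  have hexp : ∀ i j, (inner ℝ (y i) (y j) : ℝ) ^ n = ∑ f : Fin n → Fin 3, P i f * P j f := by
    intro i j
    rw [hinner]
    have : (∑ k, y i k * y j k) ^ n = ∏ _m : Fin n, (∑ k, y i k * y j k) := by
      rw [Finset.prod_const, Finset.card_univ, Fintype.card_fin]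
    rw [this, Finset.prod_univ_sum]
    rw [Fintype.piFinset_univ]
    exact Finset.sum_congr rfl fun f _ => by rw [hP]; simp [Finset.prod_mul_distrib]
  calc (0:ℝ) ≤ ∑ f : Fin n → Fin 3, (∑ i, b i * P i f) ^ 2 :=
        Finset.sum_nonneg fun f _ => sq_nonneg _
    _ = ∑ i, ∑ j, b i * b j * (inner ℝ (y i) (y j) : ℝ) ^ n := by
        simp_rw [sq, Finset.sum_mul_sum, hexp, Finset.mul_sum]
        rw [Finset.sum_comm]
        refine Finset.sum_congr rfl fun i _ => ?_
        rw [Finset.sum_comm]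
        refine Finset.sum_congr rfl fun j _ => Finset.sum_congr rfl fun f _ => by ring

lemma gauss_psd {N : ℕ} (s : ℝ) (hs : 0 ≤ s) (b : Fin N → ℝ)
    (y : Fin N → EuclideanSpace ℝ (Fin 3)) :
    0 ≤ ∑ i, ∑ j, b i * b j * Real.exp (-(s * ‖y i - y j‖ ^ 2)) := by
  set a : Fin N → ℝ := fun i => b i * Real.exp (-(s * ‖y i‖ ^ 2)) with ha
  have hexp : ∀ u : ℝ, Real.exp u = ∑' n : ℕ, u ^ n / n ! := by
    intro u
    rw [Real.exp_eq_exp_ℝ, NormedSpace.exp_eq_tsum_div]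
  have hsplit : ∀ i j, b i * b j * Real.exp (-(s * ‖y i - y j‖ ^ 2)) =
      ∑' n : ℕ, (2 * s) ^ n / n ! * (a i * a j * (inner ℝ (y i) (y j) : ℝ) ^ n) := by
    intro i j
    have hn : ‖y i - y j‖ ^ 2 = ‖y i‖ ^ 2 - 2 * (inner ℝ (y i) (y j) : ℝ) + ‖y j‖ ^ 2 :=
      norm_sub_sq_real _ _
    have : -(s * ‖y i - y j‖ ^ 2) =
        -(s * ‖y i‖ ^ 2) + -(s * ‖y j‖ ^ 2) + 2 * s * (inner ℝ (y i) (y j) : ℝ) := by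
      rw [hn]; ring
    have hterm : ∀ n : ℕ, (2 * s) ^ n / n ! * (a i * a j * (inner ℝ (y i) (y j) : ℝ) ^ n) =
        (a i * a j) * ((2 * s * (inner ℝ (y i) (y j) : ℝ)) ^ n / n !) := by
      intro n; rw [mul_pow]; ring
    rw [tsum_congr hterm, tsum_mul_left, this, Real.exp_add, Real.exp_add,
      hexp (2 * s * (inner ℝ (y i) (y j) : ℝ)), ha]
    ring
  have hsum : ∀ u : ℝ, Summable (fun n : ℕ => u ^ n / n !) := Real.summable_pow_div_factorial
  have hsumm : ∀ i j, Summable (fun n : ℕ =>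
      (2 * s) ^ n / n ! * (a i * a j * (inner ℝ (y i) (y j) : ℝ) ^ n)) := by
    intro i j
    refine (Summable.mul_left (a i * a j) (hsum (2 * s * (inner ℝ (y i) (y j) : ℝ)))).congr fun n => ?_
    rw [mul_pow]; ring
  calc (0:ℝ) ≤ ∑' n : ℕ, ∑ i, ∑ j,
        (2 * s) ^ n / n ! * (a i * a j * (inner ℝ (y i) (y j) : ℝ) ^ n) := by
        refine tsum_nonneg fun n => ?_
        have h1 : (0:ℝ) ≤ (2 * s) ^ n / n ! := by positivity
        have h2 := gram_pow_nonneg a y n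
        calc (0:ℝ) ≤ (2 * s) ^ n / n ! * ∑ i, ∑ j, a i * a j * (inner ℝ (y i) (y j) : ℝ) ^ n :=
              mul_nonneg h1 h2
          _ = _ := by simp_rw [Finset.mul_sum]
    _ = ∑ i, ∑ j, b i * b j * Real.exp (-(s * ‖y i - y j‖ ^ 2)) := by
        rw [Summable.tsum_finsetSum fun i _ => summable_sum fun j _ => hsumm i j]
        refine Finset.sum_congr rfl fun i _ => ?_
        rw [Summable.tsum_finsetSum fun j _ => hsumm i j]
        exact Finset.sum_congr rfl fun j _ => (hsplit i j).symm

-- volume of a ball of radius d in ℝ³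
lemma ball_vol (z : EuclideanSpace ℝ (Fin 3)) (d : ℝ) (hd : 0 < d) :
    (volume (Metric.ball z d)).toReal = 4 / 3 * π * d ^ 3 := by
  rw [EuclideanSpace.volume_ball]
  have hG : Real.Gamma ((Fintype.card (Fin 3) : ℝ) / 2 + 1) = 3 * Real.sqrt π / 4 := by
    rw [Fintype.card_fin]
    have h32 : ((3:ℕ):ℝ) / 2 + 1 = (3/2 : ℝ) + 1 := by norm_num
    rw [h32, Real.Gamma_add_one (by norm_num)]
    have : (3/2 : ℝ) = (1/2 : ℝ) + 1 := by norm_num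
    rw [this, Real.Gamma_add_one (by norm_num), Real.Gamma_one_half_eq]
    ring
  rw [hG, ENNReal.toReal_mul, ENNReal.toReal_pow, ENNReal.toReal_ofReal hd.le,
    ENNReal.toReal_ofReal (by positivity)]
  rw [Fintype.card_fin]
  have hπ : Real.sqrt π ^ 3 = π * Real.sqrt π := by
    have := Real.sq_sqrt Real.pi_pos.le
    nlinarith [Real.sqrt_nonneg π]
  rw [hπ]
  have hs : Real.sqrt π > 0 := Real.sqrt_pos.2 Real.pi_pos
  field_simp

lemma packing (d : ℝ) (hd : 0 < d) {N : ℕ} (x : Fin N → EuclideanSpace ℝ (Fin 3))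
    (hsep : ∀ i j, i ≠ j → 2 * d ≤ ‖x i - x j‖) (i : Fin N) (t : ℝ) (ht : 0 < t) :
    ∑ j ∈ Finset.univ.erase i, Real.exp (-(‖x i - x j‖ ^ 2 * t ^ 2)) ≤
      81 * Real.sqrt π / (32 * d ^ 3) / t ^ 3 := by
  set g : EuclideanSpace ℝ (Fin 3) → ℝ :=
    fun z => Real.exp (-(4 / 9 * t ^ 2) * ‖z - x i‖ ^ 2) with hg
  have hb : (0:ℝ) < 4 / 9 * t ^ 2 := by positivity
  have hgint : Integrable g := by
    have h0 : Integrable (fun z : EuclideanSpace ℝ (Fin 3) =>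
        Real.exp (-(4 / 9 * t ^ 2) * ‖z‖ ^ 2)) := by
      have hc := GaussianFourier.integrable_cexp_neg_mul_sq_norm_add
        (V := EuclideanSpace ℝ (Fin 3)) (b := ((4 / 9 * t ^ 2 : ℝ) : ℂ))
        (by rwa [Complex.ofReal_re]) 0 0
      refine hc.norm.congr (Filter.Eventually.of_forall fun z => ?_)
      simp only [Complex.norm_exp]
      congr 1
      rw [← Complex.ofReal_pow]
      simp [← Complex.ofReal_mul, ← Complex.ofReal_neg]
      exact Or.inl (by rw [← Complex.ofReal_pow, Complex.ofReal_re])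
    exact h0.comp_sub_right (x i)
  have hgval : ∫ z, g z = 27 * π * Real.sqrt π / (8 * t ^ 3) := by
    rw [hg]
    rw [MeasureTheory.integral_sub_right_eq_self
      (fun z : EuclideanSpace ℝ (Fin 3) => Real.exp (-(4 / 9 * t ^ 2) * ‖z‖ ^ 2)) (x i)]
    rw [GaussianFourier.integral_rexp_neg_mul_sq_norm hb]
    have hrank : (Module.finrank ℝ (EuclideanSpace ℝ (Fin 3)) : ℝ) = 3 := by
      simp [finrank_euclideanSpace]
    rw [hrank]
    have hA : (0:ℝ) < π / (4 / 9 * t ^ 2) := by positivity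
    have h32 : (3 / 2 : ℝ) = 1 + 1 / 2 := by norm_num
    rw [h32, Real.rpow_add hA, Real.rpow_one, ← Real.sqrt_eq_rpow]
    have hsq : π / (4 / 9 * t ^ 2) = (3 * Real.sqrt π / (2 * t)) ^ 2 := by
      have := Real.sq_sqrt Real.pi_pos.le
      field_simp
      nlinarith [Real.sqrt_nonneg π]
    rw [hsq, Real.sqrt_sq (by positivity)]
    rw [← hsq]
    field_simp
    nlinarith [Real.sq_sqrt Real.pi_pos.le, Real.sqrt_nonneg π, pow_pos ht 3, Real.pi_pos]
  set V : ℝ := 4 / 3 * π * d ^ 3 with hV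
  have hVpos : 0 < V := by rw [hV]; positivity
  have hkey : ∀ j ∈ Finset.univ.erase i,
      V * Real.exp (-(‖x i - x j‖ ^ 2 * t ^ 2)) ≤ ∫ z in Metric.ball (x j) d, g z := by
    intro j hj
    have hji : j ≠ i := Finset.ne_of_mem_erase hj
    have hr : 2 * d ≤ ‖x i - x j‖ := hsep i j (Ne.symm hji)
    have hpt : ∀ z ∈ Metric.ball (x j) d,
        Real.exp (-(‖x i - x j‖ ^ 2 * t ^ 2)) ≤ g z := by
      intro z hz
      rw [hg]
      apply Real.exp_le_exp.2
      have h1 : ‖z - x i‖ ≤ ‖z - x j‖ + ‖x j - x i‖ := norm_sub_le_norm_sub_add_norm_sub _ _ _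
      have h2 : ‖z - x j‖ < d := by
        rw [← dist_eq_norm]; exact Metric.mem_ball.1 hz
      have h3 : ‖x j - x i‖ = ‖x i - x j‖ := norm_sub_rev _ _
      have h4 : ‖z - x i‖ ≤ 3 / 2 * ‖x i - x j‖ := by
        rw [h3] at h1; linarith
      have h5 : (0:ℝ) ≤ ‖z - x i‖ := norm_nonneg _
      have h6 : ‖z - x i‖ ^ 2 ≤ 9 / 4 * ‖x i - x j‖ ^ 2 := by
        nlinarith [norm_nonneg (x i - x j)]
      nlinarith [sq_nonneg t]
    have := MeasureTheory.setIntegral_ge_of_const_le (μ := volume)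
      (s := Metric.ball (x j) d) (f := g)
      measurableSet_ball measure_ball_lt_top.ne hpt hgint.integrableOn
    rw [measureReal_def, ball_vol (x j) d hd, smul_eq_mul] at this
    calc V * Real.exp (-(‖x i - x j‖ ^ 2 * t ^ 2))
        = Real.exp (-(‖x i - x j‖ ^ 2 * t ^ 2)) * (4 / 3 * π * d ^ 3) := by rw [hV]; ring
      _ ≤ _ := by rw [mul_comm]; exact this
  have hdisj : (↑(Finset.univ.erase i) : Set (Fin N)).Pairwise
      (Function.onFun Disjoint fun j => Metric.ball (x j) d) := by
    intro j _ k _ hjk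
    apply Metric.ball_disjoint_ball
    rw [dist_eq_norm]
    linarith [hsep j k hjk]
  have hunion : ∑ j ∈ Finset.univ.erase i, ∫ z in Metric.ball (x j) d, g z =
      ∫ z in ⋃ j ∈ Finset.univ.erase i, Metric.ball (x j) d, g z :=
    (MeasureTheory.integral_biUnion_finset _ (fun _ _ => measurableSet_ball) hdisj
      (fun _ _ => hgint.integrableOn)).symm
  have hle : ∫ z in ⋃ j ∈ Finset.univ.erase i, Metric.ball (x j) d, g z ≤ ∫ z, g z :=
    MeasureTheory.setIntegral_le_integral hgint
      (Filter.Eventually.of_forall fun z => by rw [hg]; positivity)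
  have hmain : V * ∑ j ∈ Finset.univ.erase i, Real.exp (-(‖x i - x j‖ ^ 2 * t ^ 2)) ≤
      27 * π * Real.sqrt π / (8 * t ^ 3) := by
    rw [Finset.mul_sum]
    calc ∑ j ∈ Finset.univ.erase i, V * Real.exp (-(‖x i - x j‖ ^ 2 * t ^ 2))
        ≤ ∑ j ∈ Finset.univ.erase i, ∫ z in Metric.ball (x j) d, g z :=
          Finset.sum_le_sum hkey
      _ = ∫ z in ⋃ j ∈ Finset.univ.erase i, Metric.ball (x j) d, g z := hunion
      _ ≤ ∫ z, g z := hle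
      _ = 27 * π * Real.sqrt π / (8 * t ^ 3) := hgval
  have hfinal : (27 * π * Real.sqrt π / (8 * t ^ 3)) / V =
      81 * Real.sqrt π / (32 * d ^ 3) / t ^ 3 := by
    rw [hV]
    have hπ : π ≠ 0 := Real.pi_ne_zero
    field_simp
    ring
  rw [← hfinal]
  rw [le_div_iff₀ hVpos, mul_comm]
  exact hmain

set_option maxHeartbeats 1000000 in
/-- Discrete lower bound for the Newtonian interaction energy of a `2d`-separated family
of points: `Σ_{i ≠ j} c_i c_j/(4π‖x_i − x_j‖) ≥ −(3/(2πd)) Σ c_i²`. -/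
theorem newtonian_interaction_lower_bound (d : ℝ) (hd : 0 < d) (N : ℕ)
    (x : Fin N → EuclideanSpace ℝ (Fin 3))
    (hsep : ∀ i j, i ≠ j → 2 * d ≤ ‖x i - x j‖)
    (c : Fin N → ℝ) :
    -(3 / (2 * π * d)) * ∑ i, (c i) ^ 2 ≤
      ∑ i, ∑ j ∈ Finset.univ.erase i, c i * c j / (4 * π * ‖x i - x j‖) := by
  have hπ := Real.pi_pos
  have hsπ : 0 < Real.sqrt π := Real.sqrt_pos.2 Real.pi_pos
  set Q : ℝ := ∑ i, (c i) ^ 2 with hQ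
  have hQ0 : 0 ≤ Q := Finset.sum_nonneg fun i _ => sq_nonneg _
  set A : ℝ := 1 / (2 * π * Real.sqrt π) with hA
  have hA0 : 0 < A := by rw [hA]; positivity
  have hrpos : ∀ i j : Fin N, j ∈ Finset.univ.erase i → (0:ℝ) < ‖x i - x j‖ := by
    intro i j hj
    have := hsep i j (Finset.ne_of_mem_erase hj).symm
    linarith
  -- integrability of each pair term
  have hint : ∀ i j : Fin N, j ∈ Finset.univ.erase i →
      Integrable (fun t : ℝ => c i * c j * Real.exp (-(‖x i - x j‖ ^ 2 * t ^ 2))) := by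
    intro i j hj
    have hr := hrpos i j hj
    have h2 : (0:ℝ) < ‖x i - x j‖ ^ 2 := by positivity
    have := (integrable_exp_neg_mul_sq h2).const_mul (c i * c j)
    simpa only [neg_mul] using this
  set F : ℝ → ℝ := fun t => ∑ i, ∑ j ∈ Finset.univ.erase i,
    c i * c j * Real.exp (-(‖x i - x j‖ ^ 2 * t ^ 2)) with hF
  have hFint : Integrable F :=
    integrable_finset_sum _ fun i _ => integrable_finset_sum _ fun j hj => hint i j hj
  -- value of each pair integral
  have hval : ∀ i j : Fin N, j ∈ Finset.univ.erase i →
      c i * c j / (4 * π * ‖x i - x j‖) =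
      A * ∫ t in Ioi (0:ℝ), c i * c j * Real.exp (-(‖x i - x j‖ ^ 2 * t ^ 2)) := by
    intro i j hj
    have hr := hrpos i j hj
    have hgauss : ∫ t in Ioi (0:ℝ), Real.exp (-(‖x i - x j‖ ^ 2 * t ^ 2)) =
        Real.sqrt π / (2 * ‖x i - x j‖) := by
      have h1 : ∫ t in Ioi (0:ℝ), Real.exp (-(‖x i - x j‖ ^ 2 * t ^ 2)) =
          ∫ t in Ioi (0:ℝ), Real.exp (-‖x i - x j‖ ^ 2 * t ^ 2) := by
        simp_rw [neg_mul]
      rw [h1, integral_gaussian_Ioi]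
      have h2 : π / ‖x i - x j‖ ^ 2 = (Real.sqrt π / ‖x i - x j‖) ^ 2 := by
        rw [div_pow, Real.sq_sqrt Real.pi_pos.le]
      rw [h2, Real.sqrt_sq (by positivity)]
      field_simp
    rw [MeasureTheory.integral_const_mul, hgauss, hA]
    field_simp
    ring
  -- total sum as an integral
  have htotal : ∑ i, ∑ j ∈ Finset.univ.erase i, c i * c j / (4 * π * ‖x i - x j‖) =
      A * ∫ t in Ioi (0:ℝ), F t := by
    have h1 : ∫ t in Ioi (0:ℝ), F t = ∑ i, ∑ j ∈ Finset.univ.erase i,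
        ∫ t in Ioi (0:ℝ), c i * c j * Real.exp (-(‖x i - x j‖ ^ 2 * t ^ 2)) := by
      rw [hF, MeasureTheory.integral_finset_sum _
        (fun i _ => (integrable_finset_sum _ fun j hj => hint i j hj).integrableOn)]
      exact Finset.sum_congr rfl fun i _ => MeasureTheory.integral_finset_sum _
        (fun j hj => (hint i j hj).integrableOn)
    rw [h1, Finset.mul_sum]
    refine Finset.sum_congr rfl fun i _ => ?_
    rw [Finset.mul_sum]
    exact Finset.sum_congr rfl fun j hj => hval i j hj
  set T : ℝ := 2 / d with hT
  have hT0 : 0 < T := by rw [hT]; positivity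
  have hsplit : ∫ t in Ioi (0:ℝ), F t = (∫ t in Ioc (0:ℝ) T, F t) + ∫ t in Ioi T, F t := by
    rw [← Set.Ioc_union_Ioi_eq_Ioi hT0.le]
    exact MeasureTheory.setIntegral_union (Set.Ioc_disjoint_Ioi le_rfl) measurableSet_Ioi
      hFint.integrableOn hFint.integrableOn
  -- pointwise PSD lower bound
  have hpsd : ∀ t : ℝ, -Q ≤ F t := by
    intro t
    have h0 := gauss_psd (t ^ 2) (sq_nonneg t) c x
    have h0' : (0:ℝ) ≤ ∑ i, ∑ j, c i * c j * Real.exp (-(‖x i - x j‖ ^ 2 * t ^ 2)) := by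
      refine le_of_le_of_eq h0 (Finset.sum_congr rfl fun i _ =>
        Finset.sum_congr rfl fun j _ => ?_)
      rw [mul_comm (t ^ 2)]
    have hdiag : ∀ i : Fin N, ∑ j, c i * c j * Real.exp (-(‖x i - x j‖ ^ 2 * t ^ 2)) =
        (∑ j ∈ Finset.univ.erase i, c i * c j * Real.exp (-(‖x i - x j‖ ^ 2 * t ^ 2)))
          + c i ^ 2 := by
      intro i
      rw [← Finset.sum_erase_add _ _ (Finset.mem_univ i)]
      congr 1
      simp [sq]
    rw [Finset.sum_congr rfl (fun i _ => hdiag i), Finset.sum_add_distrib] at h0'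
    have : (0:ℝ) ≤ F t + Q := h0'
    linarith
  -- lower bound on the compact piece
  have hIoc : -Q * T ≤ ∫ t in Ioc (0:ℝ) T, F t := by
    have h1 : ∫ t in Ioc (0:ℝ) T, (fun _ : ℝ => -Q) t ≤ ∫ t in Ioc (0:ℝ) T, F t := by
      refine MeasureTheory.setIntegral_mono_on ?_ hFint.integrableOn measurableSet_Ioc
        (fun t _ => hpsd t)
      exact MeasureTheory.integrableOn_const (by
        rw [Real.volume_Ioc]; exact ENNReal.ofReal_ne_top)
    rw [MeasureTheory.setIntegral_const, measureReal_def, Real.volume_Ioc,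
      ENNReal.toReal_ofReal (by linarith), smul_eq_mul] at h1
    calc -Q * T = (T - 0) * (-Q) := by ring
      _ ≤ _ := h1
  -- tail pointwise bound
  set K0 : ℝ := 81 * Real.sqrt π / (32 * d ^ 3) with hK0
  have hK00 : 0 ≤ K0 := by rw [hK0]; positivity
  have htailpt : ∀ t : ℝ, t ∈ Ioi T → -(K0 * Q) * t ^ (-3 : ℝ) ≤ F t := by
    intro t ht'
    have ht : (0:ℝ) < t := lt_trans hT0 ht'
    have hrpow : t ^ (-3 : ℝ) = (t ^ 3)⁻¹ := by
      rw [show (-3 : ℝ) = -(3:ℕ) by norm_num, Real.rpow_neg ht.le, Real.rpow_natCast]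
    have hS : ∀ i : Fin N,
        ∑ j ∈ Finset.univ.erase i, Real.exp (-(‖x i - x j‖ ^ 2 * t ^ 2)) ≤ K0 / t ^ 3 := by
      intro i
      have := packing d hd x hsep i t ht
      rw [hK0]
      exact this
    -- bound each term below by minus a square average
    have hterm : ∀ i : Fin N, ∀ j ∈ Finset.univ.erase i,
        -((c i ^ 2 + c j ^ 2) / 2 * Real.exp (-(‖x i - x j‖ ^ 2 * t ^ 2))) ≤
        c i * c j * Real.exp (-(‖x i - x j‖ ^ 2 * t ^ 2)) := by
      intro i j _
      nlinarith [Real.exp_pos (-(‖x i - x j‖ ^ 2 * t ^ 2)), sq_nonneg (c i + c j)]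
    have h1 : -(∑ i, ∑ j ∈ Finset.univ.erase i,
        (c i ^ 2 + c j ^ 2) / 2 * Real.exp (-(‖x i - x j‖ ^ 2 * t ^ 2))) ≤ F t := by
      rw [hF, ← Finset.sum_neg_distrib]
      refine Finset.sum_le_sum fun i _ => ?_
      rw [← Finset.sum_neg_distrib]
      exact Finset.sum_le_sum fun j hj => hterm i j hj
    -- split the average into two sums
    have h2 : ∑ i, ∑ j ∈ Finset.univ.erase i,
        (c i ^ 2 + c j ^ 2) / 2 * Real.exp (-(‖x i - x j‖ ^ 2 * t ^ 2)) ≤ K0 / t ^ 3 * Q := by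
      have hsplit2 : ∀ i : Fin N, ∀ j ∈ Finset.univ.erase i,
          (c i ^ 2 + c j ^ 2) / 2 * Real.exp (-(‖x i - x j‖ ^ 2 * t ^ 2)) =
          c i ^ 2 / 2 * Real.exp (-(‖x i - x j‖ ^ 2 * t ^ 2)) +
          c j ^ 2 / 2 * Real.exp (-(‖x i - x j‖ ^ 2 * t ^ 2)) := by
        intro i j _; ring
      rw [Finset.sum_congr rfl fun i _ => Finset.sum_congr rfl fun j hj => hsplit2 i j hj]
      have hsum2 : ∑ i : Fin N, ∑ j ∈ Finset.univ.erase i,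
          (c i ^ 2 / 2 * Real.exp (-(‖x i - x j‖ ^ 2 * t ^ 2)) +
           c j ^ 2 / 2 * Real.exp (-(‖x i - x j‖ ^ 2 * t ^ 2))) =
          (∑ i : Fin N, ∑ j ∈ Finset.univ.erase i,
            c i ^ 2 / 2 * Real.exp (-(‖x i - x j‖ ^ 2 * t ^ 2))) +
          ∑ i : Fin N, ∑ j ∈ Finset.univ.erase i,
            c j ^ 2 / 2 * Real.exp (-(‖x i - x j‖ ^ 2 * t ^ 2)) := by
        rw [← Finset.sum_add_distrib]
        exact Finset.sum_congr rfl fun i _ => Finset.sum_add_distrib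
      rw [hsum2]
      have hb1 : ∑ i : Fin N, ∑ j ∈ Finset.univ.erase i,
          c i ^ 2 / 2 * Real.exp (-(‖x i - x j‖ ^ 2 * t ^ 2)) ≤ K0 / t ^ 3 * Q / 2 := by
        have : ∀ i : Fin N, ∑ j ∈ Finset.univ.erase i,
            c i ^ 2 / 2 * Real.exp (-(‖x i - x j‖ ^ 2 * t ^ 2)) ≤
            c i ^ 2 / 2 * (K0 / t ^ 3) := by
          intro i
          rw [← Finset.mul_sum]
          exact mul_le_mul_of_nonneg_left (hS i) (by positivity)
        calc ∑ i : Fin N, ∑ j ∈ Finset.univ.erase i,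
              c i ^ 2 / 2 * Real.exp (-(‖x i - x j‖ ^ 2 * t ^ 2))
            ≤ ∑ i : Fin N, c i ^ 2 / 2 * (K0 / t ^ 3) :=
              Finset.sum_le_sum fun i _ => this i
          _ = K0 / t ^ 3 * Q / 2 := by
              rw [← Finset.sum_mul, ← Finset.sum_div, ← hQ]; ring
      have hswap : ∑ i : Fin N, ∑ j ∈ Finset.univ.erase i,
          c j ^ 2 / 2 * Real.exp (-(‖x i - x j‖ ^ 2 * t ^ 2)) =
          ∑ j : Fin N, ∑ i ∈ Finset.univ.erase j,
          c j ^ 2 / 2 * Real.exp (-(‖x i - x j‖ ^ 2 * t ^ 2)) := by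
        refine Finset.sum_comm' ?_
        intro a b
        simp only [Finset.mem_univ, Finset.mem_erase, true_and, and_true, ne_eq]
        exact ne_comm
      have hb2 : ∑ i : Fin N, ∑ j ∈ Finset.univ.erase i,
          c j ^ 2 / 2 * Real.exp (-(‖x i - x j‖ ^ 2 * t ^ 2)) ≤ K0 / t ^ 3 * Q / 2 := by
        rw [hswap]
        have : ∀ j : Fin N, ∑ i ∈ Finset.univ.erase j,
            c j ^ 2 / 2 * Real.exp (-(‖x i - x j‖ ^ 2 * t ^ 2)) ≤
            c j ^ 2 / 2 * (K0 / t ^ 3) := by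
          intro j
          rw [← Finset.mul_sum]
          refine mul_le_mul_of_nonneg_left ?_ (by positivity)
          have heq : ∑ i ∈ Finset.univ.erase j, Real.exp (-(‖x i - x j‖ ^ 2 * t ^ 2)) =
              ∑ i ∈ Finset.univ.erase j, Real.exp (-(‖x j - x i‖ ^ 2 * t ^ 2)) := by
            exact Finset.sum_congr rfl fun i _ => by rw [norm_sub_rev]
          rw [heq]
          exact hS j
        calc ∑ j : Fin N, ∑ i ∈ Finset.univ.erase j,
              c j ^ 2 / 2 * Real.exp (-(‖x i - x j‖ ^ 2 * t ^ 2))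
            ≤ ∑ j : Fin N, c j ^ 2 / 2 * (K0 / t ^ 3) :=
              Finset.sum_le_sum fun j _ => this j
          _ = K0 / t ^ 3 * Q / 2 := by
              rw [← Finset.sum_mul, ← Finset.sum_div, ← hQ]; ring
      linarith
    have : -(K0 / t ^ 3 * Q) ≤ F t := by linarith
    calc -(K0 * Q) * t ^ (-3 : ℝ) = -(K0 / t ^ 3 * Q) := by rw [hrpow]; ring
      _ ≤ F t := this
  -- tail integral bound
  have hIoi : -(K0 * Q) * (d ^ 2 / 8) ≤ ∫ t in Ioi T, F t := by
    have hint3 : IntegrableOn (fun t : ℝ => t ^ (-3 : ℝ)) (Ioi T) :=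
      integrableOn_Ioi_rpow_of_lt (by norm_num) hT0
    have h1 : ∫ t in Ioi T, (fun s : ℝ => -(K0 * Q) * s ^ (-3 : ℝ)) t ≤ ∫ t in Ioi T, F t :=
      MeasureTheory.setIntegral_mono_on (hint3.const_mul _) hFint.integrableOn
        measurableSet_Ioi (fun t ht => htailpt t ht)
    have h2 : ∫ t in Ioi T, -(K0 * Q) * t ^ (-3 : ℝ) = -(K0 * Q) * (d ^ 2 / 8) := by
      rw [MeasureTheory.integral_const_mul, integral_Ioi_rpow_of_lt (by norm_num) hT0]
      have h3 : (-3 : ℝ) + 1 = -2 := by norm_num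
      rw [h3]
      have h4 : T ^ (-2 : ℝ) = d ^ 2 / 4 := by
        rw [show (-2 : ℝ) = -(2:ℕ) by norm_num, Real.rpow_neg hT0.le, Real.rpow_natCast, hT]
        field_simp
        norm_num
      rw [h4]
      ring
    rw [h2] at h1
    exact h1
  -- numeric comparison
  have hsqrt_lb : (1.77 : ℝ) ≤ Real.sqrt π := by
    nlinarith [Real.sq_sqrt Real.pi_pos.le, Real.sqrt_nonneg π, Real.pi_gt_d6]
  have hsqrt_ub : Real.sqrt π ≤ 1.8 := by
    nlinarith [Real.sq_sqrt Real.pi_pos.le, Real.sqrt_nonneg π, Real.pi_lt_d2]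
  have hcore : 2 + 81 * Real.sqrt π / 256 ≤ 3 * Real.sqrt π := by nlinarith
  have hintlow : -(Q * T + K0 * Q * (d ^ 2 / 8)) ≤ ∫ t in Ioi (0:ℝ), F t := by
    rw [hsplit]
    nlinarith [hIoc, hIoi]
  have hnum : A * (Q * T + K0 * Q * (d ^ 2 / 8)) ≤ 3 / (2 * π * d) * Q := by
    have hx : Q * T + K0 * Q * (d ^ 2 / 8) = Q * ((2 + 81 * Real.sqrt π / 256) / d) := by
      rw [hT, hK0]
      field_simp
      ring
    have hcoef : 1 / (2 * π * Real.sqrt π) * ((2 + 81 * Real.sqrt π / 256) / d) ≤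
        3 / (2 * π * d) := by
      have heq : 1 / (2 * π * Real.sqrt π) * ((2 + 81 * Real.sqrt π / 256) / d) =
          (2 + 81 * Real.sqrt π / 256) / (2 * π * Real.sqrt π * d) := by
        field_simp
      rw [heq, div_le_div_iff₀ (by positivity) (by positivity)]
      have h5 := mul_le_mul_of_nonneg_right hcore (show (0:ℝ) ≤ 2 * π * d by positivity)
      nlinarith [h5]
    calc A * (Q * T + K0 * Q * (d ^ 2 / 8))
        = Q * (1 / (2 * π * Real.sqrt π) * ((2 + 81 * Real.sqrt π / 256) / d)) := by
          rw [hx, hA]; ring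
      _ ≤ Q * (3 / (2 * π * d)) := mul_le_mul_of_nonneg_left hcoef hQ0
      _ = 3 / (2 * π * d) * Q := mul_comm _ _
  rw [htotal]
  calc -(3 / (2 * π * d)) * Q ≤ A * (-(Q * T + K0 * Q * (d ^ 2 / 8))) := by nlinarith [hnum]
    _ ≤ A * ∫ t in Ioi (0:ℝ), F t := mul_le_mul_of_nonneg_left hintlow hA0.le
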